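/- There is no n ∈ ℕ with h_n < h_{n+1} < h_{n+2} < h_{n+3}. -/
import Mathlib


def t (n : ℕ) : ℤ := (-1) ^ ((Nat.digits 2 n).sum)

def h : ℕ → ℤ
  | 0 => 0
  | 1 => 1
  | (n + 2) => t (n + 2) * h (n + 1) + h n

lemma h_rec (n : ℕ) : h (n + 2) = t (n + 2) * h (n + 1) + h n := rfl

lemma t_cases (n : ℕ) : t n = 1 ∨ t n = -1 := by
  rcases Nat.even_or_odd ((Nat.digits 2 n).sum) with hp | hp
  · exact Or.inl hp.neg_one_pow
  · exact Or.inr hp.neg_one_pow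

lemma t_even (n : ℕ) : t (2 * n) = t n := by
  rcases Nat.eq_zero_or_pos n with rfl | hn
  · rfl
  · unfold t
    rw [Nat.digits_def' (by norm_num : 1 < 2) (by omega)]
    simp [Nat.mul_div_cancel_left, Nat.mul_mod_right]

lemma t_odd (n : ℕ) : t (2 * n + 1) = -t n := by
  unfold t
  rw [Nat.digits_def' (by norm_num : 1 < 2) (by omega)]
  have h1 : (2 * n + 1) % 2 = 1 := by omega
  have h2 : (2 * n + 1) / 2 = n := by omega
  rw [h1, h2]
  simp [pow_add, pow_succ]

lemma t_mul_self (n : ℕ) : t n * t n = 1 := by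
  rcases t_cases n with hc | hc <;> rw [hc] <;> norm_num

lemma u_odd (k : ℕ) : t (2 * k + 1) * t (2 * k) = -1 := by
  rw [t_odd, t_even, neg_mul, t_mul_self]

lemma lemA (n : ℕ) : h (2 * n + 3) = -t (n + 1) * h (2 * n) := by
  have e1 : 2 * n + 3 = (2 * n + 1) + 2 := by ring
  have e2 : 2 * n + 2 = (2 * n) + 2 := by ring
  have e3 : 2 * n + 3 = 2 * (n + 1) + 1 := by ring
  have e4 : 2 * n + 2 = 2 * (n + 1) := by ring
  have r1 := h_rec (2 * n + 1)
  have r2 := h_rec (2 * n)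
  rw [← e1] at r1
  rw [← e2] at r2
  rw [e3, t_odd] at r1
  rw [e4, t_even] at r2
  rw [← e3] at r1
  rw [← e4] at r2
  rw [show 2 * n + 1 + 1 = 2 * n + 2 by omega] at r1
  rw [r2] at r1
  have sq := t_mul_self (n + 1)
  rw [r1]
  linear_combination (-h (2 * n + 1)) * sq

lemma lemB (n : ℕ) : h (2 * n + 4) = h (2 * n + 2) - t (n + 2) * t (n + 1) * h (2 * n) := by
  have e1 : 2 * n + 4 = (2 * n + 2) + 2 := by ring
  have r1 := h_rec (2 * n + 2)
  rw [← e1] at r1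
  have e2 : 2 * n + 4 = 2 * (n + 2) := by ring
  rw [e2, t_even, ← e2] at r1
  rw [r1, lemA]
  ring

lemma h2_eq : h 2 = -1 := by
  have r := h_rec 0
  have t2 : t 2 = -1 := by
    have e1 := t_even 1
    have e2 := t_odd 0
    have t0 : t 0 = 1 := by simp [t]
    norm_num at e1 e2
    rw [e1, e2, t0]
  simp [h, r, t2]

lemma hneg : ∀ n, h (2 * n + 2) < 0 := by
  intro n
  induction n using Nat.strong_induction_on with
  | _ n ih =>
    match n, ih with
    | 0, _ => rw [show 2 * 0 + 2 = 2 by ring, h2_eq]; norm_num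
    | 1, _ =>
        have := lemB 0
        have h0 : h 0 = 0 := rfl
        rw [show 2 * 1 + 2 = 2 * 0 + 4 by ring, this, h0, h2_eq]
        rcases t_cases 2 with hc | hc <;> rcases t_cases 1 with hd | hd <;>
          rw [hc, hd] <;> norm_num
    | (k + 2), ih =>
        have hB := lemB (k + 1)
        rw [show 2 * (k + 1) + 4 = 2 * (k + 2) + 2 by ring,
            show 2 * (k + 1) + 2 = 2 * k + 4 by ring,
            show 2 * (k + 1) = 2 * k + 2 by ring] at hB
        have ih1 : h (2 * k + 4) < 0 := by
          have := ih (k + 1) (by omega)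
          rwa [show 2 * (k + 1) + 2 = 2 * k + 4 by ring] at this
        have ih2 : h (2 * k + 2) < 0 := ih k (by omega)
        rcases t_cases (k + 3) with hc | hc <;> rcases t_cases (k + 2) with hd | hd
        · -- u = 1 : k+3 must be even
          rcases Nat.even_or_odd (k + 3) with ⟨j, hj⟩ | ⟨j, hj⟩
          · -- k+3 = 2j, j ≥ 2, k = 2j-3 ≥ 1
            have hj2 : 2 ≤ j := by omega
            have hu : t (k + 2) * t (k + 1) = -1 := by
              have := u_odd (j - 1)
              rw [show 2 * (j - 1) + 1 = k + 2 by omega,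
                  show 2 * (j - 1) = k + 1 by omega] at this
              exact this
            have hB2 := lemB k
            rw [hu] at hB2
            have hk1 : 1 ≤ k := by omega
            have ih3 : h (2 * k) < 0 := by
              have := ih (k - 1) (by omega)
              rwa [show 2 * (k - 1) + 2 = 2 * k by omega] at this
            rw [hB, hc, hd]
            nlinarith
          · exfalso
            have := u_odd j
            rw [show 2 * j + 1 = k + 3 by omega, show 2 * j = k + 2 by omega,
                hc, hd] at this
            norm_num at this
        · rw [hB, hc, hd]; nlinarith
        · rw [hB, hc, hd]; nlinarith
        · -- u = 1 again (product of -1s)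
          rcases Nat.even_or_odd (k + 3) with ⟨j, hj⟩ | ⟨j, hj⟩
          · have hj2 : 2 ≤ j := by omega
            have hu : t (k + 2) * t (k + 1) = -1 := by
              have := u_odd (j - 1)
              rw [show 2 * (j - 1) + 1 = k + 2 by omega,
                  show 2 * (j - 1) = k + 1 by omega] at this
              exact this
            have hB2 := lemB k
            rw [hu] at hB2
            have ih3 : h (2 * k) < 0 := by
              have := ih (k - 1) (by omega)
              rwa [show 2 * (k - 1) + 2 = 2 * k by omega] at this
            rw [hB, hc, hd]
            nlinarith
          · exfalso
            have := u_odd j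
            rw [show 2 * j + 1 = k + 3 by omega, show 2 * j = k + 2 by omega,
                hc, hd] at this
            norm_num at this

lemma h_even_nonpos (n : ℕ) : h (2 * n) ≤ 0 := by
  rcases Nat.eq_zero_or_pos n with rfl | hn
  · exact le_of_eq rfl
  · have := hneg (n - 1)
    rw [show 2 * (n - 1) + 2 = 2 * n by omega] at this
    linarith

theorem stmt9 : ¬ ∃ n : ℕ, h n < h (n + 1) ∧ h (n + 1) < h (n + 2) ∧ h (n + 2) < h (n + 3) := by
  rintro ⟨n, h1, h2, h3⟩
  rcases Nat.even_or_odd n with ⟨m, hm⟩ | ⟨m, hm⟩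
  · -- n = 2m
    subst hm
    rw [show m + m = 2 * m by ring] at h1 h2 h3
    rcases Nat.eq_zero_or_pos m with rfl | hmpos
    · -- m = 0 : h 1 < h 2 is 1 < -1, false
      norm_num [h2_eq] at h2
      have : h 1 = 1 := rfl
      rw [this] at h2
      norm_num at h2
    · have ha : h (2 * m) < 0 := by
        have := hneg (m - 1)
        rwa [show 2 * (m - 1) + 2 = 2 * m by omega] at this
      have hc : h (2 * m + 2) = t (m + 1) * h (2 * m + 1) + h (2 * m) := by
        have := h_rec (2 * m)
        rwa [show 2 * m + 2 = 2 * (m + 1) by ring, t_even,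
             show 2 * (m + 1) = 2 * m + 2 by ring] at this
      have hd : h (2 * m + 3) = -t (m + 1) * h (2 * m) := lemA m
      rcases t_cases (m + 1) with hv | hv
      · rw [hv] at hc
        rw [hc] at h2
        linarith
      · rw [hv] at hc hd
        rw [hc] at h2 h3
        rw [hd] at h3
        linarith
  · -- n = 2m + 1
    subst hm
    rw [show 2 * m + 1 + 1 = 2 * m + 2 by ring] at h1 h2
    rw [show 2 * m + 1 + 2 = 2 * m + 3 by ring] at h2 h3
    rw [show 2 * m + 1 + 3 = 2 * m + 4 by ring] at h3
    have hb : h (2 * m + 2) < 0 := hneg m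
    have hdlt : h (2 * m + 4) < 0 := by
      have := hneg (m + 1)
      rwa [show 2 * (m + 1) + 2 = 2 * m + 4 by ring] at this
    have hc : h (2 * m + 3) = -t (m + 1) * h (2 * m) := lemA m
    have hbe : h (2 * m + 2) = t (m + 1) * h (2 * m + 1) + h (2 * m) := by
      have := h_rec (2 * m)
      rwa [show 2 * m + 2 = 2 * (m + 1) by ring, t_even,
           show 2 * (m + 1) = 2 * m + 2 by ring] at this
    have hde : h (2 * m + 4) = t (m + 2) * h (2 * m + 3) + h (2 * m + 2) := by
      have := h_rec (2 * m + 2)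
      rwa [show 2 * m + 2 + 2 = 2 * (m + 2) by ring, t_even,
           show 2 * (m + 2) = 2 * m + 4 by ring,
           show 2 * m + 2 + 1 = 2 * m + 3 by ring] at this
    have hnp : h (2 * m) ≤ 0 := h_even_nonpos m
    rcases t_cases (m + 1) with hv | hv
    · -- c = -h(2m) ≥ 0, but c < d < 0
      rw [hv] at hc
      rw [hc] at h3
      linarith
    · rw [hv] at hc hbe
      rcases t_cases (m + 2) with hw | hw
      · rw [hw] at hde
        rw [hde] at h3
        linarith
      · rw [hw] at hde
        rw [hbe] at h1
        rw [hbe, hc] at h2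
        rw [hde, hc] at h3
        rw [hbe] at h3
        linarith
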